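/- arXiv:2510.10557 — 5 statements merged into one kernel-verified Lean document; each statement's English description precedes it below -/
import Mathlib

section
/- For all α ∈ [0,1], c > 0, and nonnegative reals x₁, x₂, the function H_{c,α} is subadditive: H_{c,α}(x₁ + x₂) ≤ H_{c,α}(x₁) + H_{c,α}(x₂). -/
/-- `H_{c,α}` with the convention `0^0 = 0`, i.e. the fractional-part term
vanishes when the fractional part is `0`, so that `H_{c,α}(0) = 0` for all `α`. -/
noncomputable def Hz (c α x : ℝ) : ℝ :=
  (⌊x / c⌋ : ℝ) + (if Int.fract (x / c) = 0 then 0 else Int.fract (x / c) ^ α)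

private lemma rpow_subadd {α a b : ℝ} (ha : 0 ≤ a) (hb : 0 ≤ b) (h0 : 0 ≤ α) (h1 : α ≤ 1) :
    (a + b) ^ α ≤ a ^ α + b ^ α := by
  lift a to NNReal using ha
  lift b to NNReal using hb
  exact_mod_cast NNReal.rpow_add_le_add_rpow a b h0 h1

/-- concavity-based inequality: if `a + b = 1 + t` with `t ≤ a ≤ 1`, `t ≤ b ≤ 1`, `0 ≤ t`,
then `1 + t^α ≤ a^α + b^α` for `α ∈ [0,1]`. -/
private lemma concave_key {α a b t : ℝ} (h0 : 0 ≤ α) (h1 : α ≤ 1)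
    (ht : 0 ≤ t) (hab : a + b = 1 + t) (ha1 : a ≤ 1) (hb1 : b ≤ 1) :
    1 + t ^ α ≤ a ^ α + b ^ α := by
  have hta : t ≤ a := by linarith
  have htb : t ≤ b := by linarith
  rcases eq_or_lt_of_le (le_trans hta ha1) with h | hlt
  · -- t = 1, hence a = b = 1
    have ha : a = 1 := le_antisymm ha1 (h ▸ hta)
    have hb : b = 1 := le_antisymm hb1 (h ▸ htb)
    rw [ha, hb, ← h, h, Real.one_rpow]
  · -- t < 1
    have hconc := Real.concaveOn_rpow h0 h1
    set s : ℝ := (1 - a) / (1 - t) with hs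
    have hden : (0:ℝ) < 1 - t := by linarith
    have hs0 : 0 ≤ s := div_nonneg (by linarith) hden.le
    have hs1 : s ≤ 1 := (div_le_one hden).mpr (by linarith)
    have hsum : s + (1 - s) = 1 := by ring
    have hkey : s * (1 - t) = 1 - a := by
      rw [hs, div_mul_cancel₀ _ hden.ne']
    have hA : s * t + (1 - s) * 1 = a := by nlinarith [hkey]
    have hB : (1 - s) * t + s * 1 = b := by nlinarith [hkey]
    have htm : t ∈ Set.Ici (0:ℝ) := ht
    have h1m : (1:ℝ) ∈ Set.Ici (0:ℝ) := Set.mem_Ici.mpr zero_le_one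
    have hca : s * t ^ α + (1 - s) * 1 ^ α ≤ a ^ α := by
      have h' := hconc.2 htm h1m hs0 (by linarith) hsum
      simp only [smul_eq_mul] at h'
      rwa [hA] at h'
    have hcb : (1 - s) * t ^ α + s * 1 ^ α ≤ b ^ α := by
      have h' := hconc.2 htm h1m (by linarith : (0:ℝ) ≤ 1 - s) hs0 (by ring)
      simp only [smul_eq_mul] at h'
      rwa [hB] at h' 
    have h1p : (1:ℝ) ^ α = 1 := Real.one_rpow α
    rw [h1p] at hca hcb
    nlinarith [hca, hcb]

theorem stmt4 (α c x₁ x₂ : ℝ) (hα : α ∈ Set.Icc (0 : ℝ) 1) (hc : 0 < c)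
    (hx₁ : 0 ≤ x₁) (hx₂ : 0 ≤ x₂) :
    Hz c α (x₁ + x₂) ≤ Hz c α x₁ + Hz c α x₂ := by
  obtain ⟨h0, h1⟩ := hα
  set u := x₁ / c with hu
  set v := x₂ / c with hv
  have huv : (x₁ + x₂) / c = u + v := by rw [hu, hv]; ring
  set a := Int.fract u with ha
  set b := Int.fract v with hb
  have ha0 : 0 ≤ a := Int.fract_nonneg u
  have hb0 : 0 ≤ b := Int.fract_nonneg v
  have ha1 : a < 1 := Int.fract_lt_one u
  have hb1 : b < 1 := Int.fract_lt_one v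
  have hsplit : u + v = (a + b) + ((⌊u⌋ + ⌊v⌋ : ℤ) : ℝ) := by
    have hau : a = u - ⌊u⌋ := rfl
    have hbv : b = v - ⌊v⌋ := rfl
    rw [hau, hbv]; push_cast; ring
  have hfr : Int.fract (u + v) = Int.fract (a + b) := by
    rw [hsplit, Int.fract_add_intCast]
  have hfl : (⌊u + v⌋ : ℝ) = (⌊u⌋ : ℝ) + ⌊v⌋ + ⌊a + b⌋ := by
    have : ⌊u + v⌋ = ⌊u⌋ + ⌊v⌋ + ⌊a + b⌋ := by
      rw [hsplit, Int.floor_add_intCast]; ring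
    exact_mod_cast this
  unfold Hz
  rw [← hu, ← hv, huv, ← ha, ← hb, hfr, hfl]
  rcases lt_or_ge (a + b) 1 with hlt | hge
  · -- no carry
    have hfab : Int.fract (a + b) = a + b := Int.fract_eq_self.mpr ⟨by linarith, hlt⟩
    have hflab : ⌊a + b⌋ = 0 := Int.floor_eq_zero_iff.mpr ⟨by linarith, hlt⟩
    rw [hfab, hflab]
    push_cast
    rcases eq_or_lt_of_le ha0 with haz | hap
    · simp [← haz]
      linarith
    rcases eq_or_lt_of_le hb0 with hbz | hbp
    · simp [← hbz]
      linarith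
    have : a + b ≠ 0 := by positivity
    rw [if_neg this, if_neg (by positivity), if_neg (by positivity)]
    have := rpow_subadd ha0 hb0 h0 h1
    linarith
  · -- carry
    have hap : 0 < a := by linarith
    have hbp : 0 < b := by linarith
    set t : ℝ := a + b - 1 with htdef
    have ht0 : 0 ≤ t := by linarith
    have ht1 : t < 1 := by linarith
    have habt : a + b = 1 + t := by ring
    have hfab : Int.fract (a + b) = t := by
      rw [show a + b = t + (1:ℤ) by push_cast; linarith, Int.fract_add_intCast]
      exact Int.fract_eq_self.mpr ⟨ht0, ht1⟩
    have hflab : ⌊a + b⌋ = 1 := by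
      rw [show a + b = t + (1:ℤ) by push_cast; linarith, Int.floor_add_intCast]
      rw [Int.floor_eq_zero_iff.mpr ⟨ht0, ht1⟩]
      norm_num
    rw [hfab, hflab]
    push_cast
    rw [if_neg (ne_of_gt hap), if_neg (ne_of_gt hbp)]
    have haa : a ≤ a ^ α := by
      calc a = a ^ (1:ℝ) := (Real.rpow_one a).symm
      _ ≤ a ^ α := Real.rpow_le_rpow_of_exponent_ge hap ha1.le h1
    have hbb : b ≤ b ^ α := by
      calc b = b ^ (1:ℝ) := (Real.rpow_one b).symm
      _ ≤ b ^ α := Real.rpow_le_rpow_of_exponent_ge hbp hb1.le h1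
    rcases eq_or_ne t 0 with htz | htz
    · rw [if_pos htz]
      have : a + b = 1 := by rw [habt, htz]; ring
      linarith
    · rw [if_neg htz]
      have := concave_key h0 h1 ht0 habt ha1.le hb1.le
      linarith
end

section
/- For α ∈ [0,1], any real M with 1 ≤ M < 2, and any x with 0 ≤ x < 1 and 0 ≤ M − x < 1, one has 1 + (M − 1)^α ≤ x^α + (M − x)^α. -/
theorem stmt7 (α M x : ℝ) (hα : α ∈ Set.Icc (0 : ℝ) 1)
    (hx0 : 0 ≤ x) (hx1 : x < 1) (hM1 : 1 ≤ M) (hM2 : M < 2)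
    (hMx0 : 0 ≤ M - x) (hMx1 : M - x < 1) :
    1 + (M - 1) ^ α ≤ x ^ α + (M - x) ^ α := by
  obtain ⟨hα0, hα1⟩ := hα
  have hconc := Real.concaveOn_rpow hα0 hα1
  have h2M : 0 < 2 - M := by linarith
  set t := (1 - x) / (2 - M) with ht
  have ht0 : 0 ≤ t := div_nonneg (by linarith) h2M.le
  have ht1 : t ≤ 1 := by rw [div_le_one h2M]; linarith
  have hM10 : (0:ℝ) ≤ M - 1 := by linarith
  have e1 : t * (M - 1) + (1 - t) * 1 = x := by field_simp [ht]; have h := div_mul_cancel₀ (1 - x) h2M.ne'; rw [← ht] at h; linear_combination -h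
  have e2 : (1 - t) * (M - 1) + t * 1 = M - x := by field_simp [ht]; have h := div_mul_cancel₀ (1 - x) h2M.ne'; rw [← ht] at h; linear_combination h
  have ht0' : (0:ℝ) ≤ 1 - t := by linarith
  have hab : t + (1 - t) = 1 := by ring
  have hab' : (1 - t) + t = 1 := by ring
  have hA := hconc.2 (Set.mem_Ici.2 hM10) (Set.mem_Ici.2 zero_le_one) ht0 ht0' hab
  have hB := hconc.2 (Set.mem_Ici.2 hM10) (Set.mem_Ici.2 zero_le_one) ht0' ht0 hab'
  simp only [smul_eq_mul, Real.one_rpow] at hA hB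
  rw [e1] at hA
  rw [e2] at hB
  linarith
end

section
/- For 0 ≤ h ≤ 1, α ∈ [0,1], and all x ≥ 0: h^α(⌊x⌋ + (x − ⌊x⌋)^α) ≥ ⌊hx⌋ + (hx − ⌊hx⌋)^α. -/
lemma aux_concave (α : ℝ) (hα0 : 0 ≤ α) (hα1 : α ≤ 1) {x y d : ℝ}
    (hx : 0 ≤ x) (hxy : x ≤ y) (hd : 0 ≤ d) :
    (y + d) ^ α + x ^ α ≤ (x + d) ^ α + y ^ α := by
  rcases eq_or_lt_of_le hxy with rfl | hlt
  · simp [add_comm]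
  have hy : (0:ℝ) ≤ y := hx.trans hxy
  have hT : 0 < y + d - x := by linarith
  set T := y + d - x with hTdef
  set s : ℝ := (y - x) / T with hs
  set t : ℝ := d / T with ht
  have hs0 : 0 ≤ s := div_nonneg (by linarith) hT.le
  have ht0 : 0 ≤ t := div_nonneg hd hT.le
  have hst : s + t = 1 := by rw [hs, ht, ← add_div, hTdef, div_eq_one_iff_eq (show y + d - x ≠ 0 by linarith)]; ring
  have C := Real.concaveOn_rpow hα0 hα1
  have h1 := C.2 (Set.mem_Ici.2 hx) (Set.mem_Ici.2 (by positivity : (0:ℝ) ≤ y + d))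
      hs0 ht0 hst
  have h2 := C.2 (Set.mem_Ici.2 hx) (Set.mem_Ici.2 (by positivity : (0:ℝ) ≤ y + d))
      ht0 hs0 (by linarith)
  have e1 : s • x + t • (y + d) = x + d := by
    simp only [smul_eq_mul, hs, ht]
    field_simp
    ring
  have e2 : t • x + s • (y + d) = y := by
    simp only [smul_eq_mul, hs, ht]
    field_simp
    ring
  rw [e1] at h1
  rw [e2] at h2
  simp only [smul_eq_mul] at h1 h2
  have hsum := add_le_add h1 h2
  have hexp : x ^ α + (y + d) ^ α =
      s * x ^ α + t * (y + d) ^ α + (t * x ^ α + s * (y + d) ^ α) := by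
    have ht' : t = 1 - s := by linarith
    rw [ht']; ring
  linarith

lemma aux_subadd (α : ℝ) (hα0 : 0 < α) (hα1 : α ≤ 1) {a b : ℝ}
    (ha : 0 ≤ a) (hb : 0 ≤ b) : (a + b) ^ α ≤ a ^ α + b ^ α := by
  have := aux_concave α hα0.le hα1 (x := 0) (y := a) (d := b) le_rfl ha hb
  rw [Real.zero_rpow hα0.ne', zero_add] at this
  linarith

lemma aux_step (α : ℝ) (hα0 : 0 < α) (hα1 : α ≤ 1) {s u : ℝ}
    (hs : 0 ≤ s) (hu0 : 0 ≤ u) (hu1 : u ≤ 1) :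
    (⌊s + u⌋ : ℝ) + (s + u - ⌊s + u⌋) ^ α ≤
      (⌊s⌋ : ℝ) + (s - ⌊s⌋) ^ α + u ^ α := by
  have he0 : (⌊s⌋ : ℝ) ≤ s := Int.floor_le s
  have he1 : s < ⌊s⌋ + 1 := Int.lt_floor_add_one s
  set e : ℝ := s - ⌊s⌋ with hedef
  have he0' : 0 ≤ e := by linarith
  have he1' : e < 1 := by rw [hedef]; linarith
  by_cases hcase : e + u < 1
  · have hfl : ⌊s + u⌋ = ⌊s⌋ := by
      rw [Int.floor_eq_iff]
      constructor <;> push_cast <;> [linarith; linarith]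
    rw [hfl]
    have : s + u - (⌊s⌋ : ℝ) = e + u := by rw [hedef]; ring
    rw [this]
    have := aux_subadd α hα0 hα1 he0' hu0
    linarith
  · push_neg at hcase
    have hfl : ⌊s + u⌋ = ⌊s⌋ + 1 := by
      rw [Int.floor_eq_iff]
      constructor <;> push_cast <;> [linarith; linarith]
    rw [hfl]
    push_cast
    have hw : s + u - ((⌊s⌋ : ℝ) + 1) = e + u - 1 := by rw [hedef]; ring
    rw [hw]
    set w : ℝ := e + u - 1 with hwdef
    have hw0 : 0 ≤ w := by linarith
    have hwe : w ≤ e := by linarith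
    have key := aux_concave α hα0.le hα1 (x := w) (y := e) (d := 1 - e) hw0 hwe
      (by linarith)
    have e3 : e + (1 - e) = 1 := by ring
    have e4 : w + (1 - e) = u := by rw [hwdef]; ring
    rw [e3, e4, Real.one_rpow] at key
    linarith

lemma aux_nat (α h : ℝ) (hα0 : 0 < α) (hα1 : α ≤ 1) (hh0 : 0 ≤ h) (hh1 : h ≤ 1)
    (n : ℕ) : (⌊h * n⌋ : ℝ) + (h * n - ⌊h * n⌋) ^ α ≤ h ^ α * n := by
  induction n with
  | zero => simp [Real.zero_rpow hα0.ne']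
  | succ n ih =>
    have hn : (0:ℝ) ≤ h * n := by positivity
    have step := aux_step α hα0 hα1 (s := h * n) (u := h) hn hh0 hh1
    have e1 : h * (n + 1 : ℕ) = h * n + h := by push_cast; ring
    rw [e1]
    calc (⌊h * n + h⌋ : ℝ) + (h * n + h - ⌊h * n + h⌋) ^ α
        ≤ (⌊h * n⌋ : ℝ) + (h * n - ⌊h * n⌋) ^ α + h ^ α := step
      _ ≤ h ^ α * n + h ^ α := by linarith
      _ = h ^ α * ((n : ℝ) + 1) := by ring
      _ = h ^ α * ((n + 1 : ℕ) : ℝ) := by push_cast; ring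

theorem stmt10 (α h x : ℝ) (hα : α ∈ Set.Icc (0 : ℝ) 1)
    (hh : h ∈ Set.Icc (0 : ℝ) 1) (hx : 0 ≤ x) :
    (⌊h * x⌋ : ℝ) + (h * x - ⌊h * x⌋) ^ α ≤
      h ^ α * ((⌊x⌋ : ℝ) + (x - ⌊x⌋) ^ α) := by
  obtain ⟨hα0, hα1⟩ := hα
  obtain ⟨hh0, hh1⟩ := hh
  rcases eq_or_lt_of_le hα0 with rfl | hαpos
  · simp only [Real.rpow_zero, one_mul]
    have hfl : ⌊h * x⌋ ≤ ⌊x⌋ := Int.floor_le_floor (by nlinarith)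
    have : ((⌊h * x⌋ : ℤ) : ℝ) ≤ ((⌊x⌋ : ℤ) : ℝ) := by exact_mod_cast hfl
    linarith
  -- main case: 0 < α
  have hnn : 0 ≤ ⌊x⌋ := Int.floor_nonneg.2 hx
  set n : ℕ := ⌊x⌋.toNat with hndef
  have hncast : ((n : ℤ) : ℝ) = (⌊x⌋ : ℝ) := by
    rw [hndef]; exact_mod_cast congrArg (Int.cast : ℤ → ℝ) (Int.toNat_of_nonneg hnn)
  have hncast' : (n : ℝ) = (⌊x⌋ : ℝ) := by exact_mod_cast hncast
  set f : ℝ := x - ⌊x⌋ with hfdef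
  have hf0 : 0 ≤ f := by linarith [Int.floor_le x]
  have hf1 : f < 1 := by rw [hfdef]; linarith [Int.lt_floor_add_one x]
  have hxsplit : h * x = h * n + h * f := by rw [hncast', hfdef]; ring
  have hu0 : 0 ≤ h * f := by positivity
  have hu1 : h * f ≤ 1 := by nlinarith
  have step := aux_step α hαpos hα1 (s := h * n) (u := h * f) (by positivity) hu0 hu1
  have natb := aux_nat α h hαpos hα1 hh0 hh1 n
  have hmul : (h * f) ^ α = h ^ α * f ^ α := Real.mul_rpow hh0 hf0
  rw [hxsplit]
  calc (⌊h * n + h * f⌋ : ℝ) + (h * n + h * f - ⌊h * n + h * f⌋) ^ α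
      ≤ (⌊h * n⌋ : ℝ) + (h * n - ⌊h * n⌋) ^ α + (h * f) ^ α := step
    _ ≤ h ^ α * n + h ^ α * f ^ α := by rw [hmul]; linarith
    _ = h ^ α * ((⌊x⌋ : ℝ) + f ^ α) := by rw [hncast']; ring
end

section
/- For h ≥ 1, α ∈ [0,1], and all x ≥ 0: h^α(⌊x⌋ + (x − ⌊x⌋)^α) ≤ ⌊hx⌋ + (hx − ⌊hx⌋)^α. -/
open scoped NNReal

lemma aux_rpow_subadd {α a b : ℝ} (hα0 : 0 < α) (hα1 : α ≤ 1) (ha : 0 ≤ a) (hb : 0 ≤ b) :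
    (a + b) ^ α ≤ a ^ α + b ^ α := by
  have h := NNReal.rpow_add_le_add_rpow a.toNNReal b.toNNReal hα0.le hα1
  rw [← Real.toNNReal_add ha hb] at h
  have h2 : (((a + b).toNNReal ^ α : ℝ≥0) : ℝ) ≤ ((a.toNNReal ^ α + b.toNNReal ^ α : ℝ≥0) : ℝ) :=
    mod_cast h
  rwa [NNReal.coe_add, NNReal.coe_rpow, NNReal.coe_rpow, NNReal.coe_rpow,
    Real.coe_toNNReal _ (by linarith), Real.coe_toNNReal _ ha, Real.coe_toNNReal _ hb] at h2

lemma aux_rpow_ge_self {t α : ℝ} (ht0 : 0 ≤ t) (ht1 : t ≤ 1) (hα0 : 0 < α) (hα1 : α ≤ 1) :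
    t ≤ t ^ α := by
  rcases eq_or_lt_of_le ht0 with rfl | ht0'
  · exact Real.rpow_nonneg le_rfl α
  · calc t = t ^ (1 : ℝ) := (Real.rpow_one t).symm
      _ ≤ t ^ α := Real.rpow_le_rpow_of_exponent_ge ht0' ht1 hα1

lemma aux_key_rpow {α r s : ℝ} (hα0 : 0 < α) (hα1 : α ≤ 1) (hr : 0 ≤ r) (hs : 0 ≤ s)
    (hrs : r + s ≤ 1) : r ^ α + α * s ≤ (r + s) ^ α := by
  rcases eq_or_lt_of_le hs with rfl | hs'
  · simp
  · have hr1 : r < 1 := by linarith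
    have h1r : 0 < 1 - r := by linarith
    set lam := s / (1 - r) with hlam
    have hlam0 : 0 ≤ lam := div_nonneg hs h1r.le
    have hlam1 : lam ≤ 1 := by rw [hlam, div_le_one h1r]; linarith
    have hlamr : lam * (1 - r) = s := by rw [hlam]; exact div_mul_cancel₀ s h1r.ne'
    have hcon := (Real.concaveOn_rpow hα0.le hα1).2 (Set.mem_Ici.2 hr)
      (Set.mem_Ici.2 (zero_le_one (α := ℝ))) (by linarith : (0:ℝ) ≤ 1 - lam) hlam0
      (by ring : (1 - lam) + lam = 1)
    simp only [smul_eq_mul, mul_one, Real.one_rpow] at hcon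
    have hx : (1 - lam) * r + lam = r + s := by nlinarith [hlamr]
    rw [hx] at hcon
    have hber : r ^ α ≤ 1 + α * (r - 1) := by
      have h := rpow_one_add_le_one_add_mul_self (s := r - 1) (by linarith) hα0.le hα1
      rwa [show (1 : ℝ) + (r - 1) = r by ring] at h
    nlinarith [hcon, hber, hlamr, hlam0]

theorem stmt11 (α h x : ℝ) (hα : α ∈ Set.Icc (0 : ℝ) 1)
    (hh : 1 ≤ h) (hx : 0 ≤ x) :
    h ^ α * ((⌊x⌋ : ℝ) + (x - ⌊x⌋) ^ α) ≤
      (⌊h * x⌋ : ℝ) + (h * x - ⌊h * x⌋) ^ α := by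
  obtain ⟨hα0, hα1⟩ := hα
  have h0 : (0:ℝ) < h := lt_of_lt_of_le one_pos hh
  have hxhx : x ≤ h * x := le_mul_of_one_le_left hx hh
  have hfl : (⌊x⌋ : ℝ) ≤ (⌊h * x⌋ : ℝ) := by exact_mod_cast Int.floor_le_floor hxhx
  rcases eq_or_lt_of_le hα0 with rfl | hα0'
  · simp only [Real.rpow_zero, one_mul]
    linarith
  -- now 0 < α
  set N : ℝ := (⌊x⌋ : ℝ) with hN
  have hN0 : 0 ≤ N := by rw [hN]; exact_mod_cast Int.floor_nonneg.2 hx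
  have hu0 : 0 ≤ x - N := by have := Int.floor_le x; linarith
  have hu1 : x - N < 1 := by have := Int.lt_floor_add_one x; linarith
  set r : ℝ := h * (x - N) with hr
  have hr0 : 0 ≤ r := mul_nonneg h0.le hu0
  have hru : h ^ α * (x - N) ^ α = r ^ α := (Real.mul_rpow h0.le hu0).symm
  -- floor bounds for h*x
  have hmle : (⌊h * x⌋ : ℝ) ≤ h * x := Int.floor_le _
  have hmlt : h * x < (⌊h * x⌋ : ℝ) + 1 := Int.lt_floor_add_one _
  by_cases hr1 : 1 ≤ r
  · -- easy case: h*(x-N) ≥ 1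
    have hhα : h ^ α ≤ h := by
      calc h ^ α ≤ h ^ (1:ℝ) := Real.rpow_le_rpow_of_exponent_le hh hα1
        _ = h := Real.rpow_one h
    have hrα : r ^ α ≤ r := by
      calc r ^ α ≤ r ^ (1:ℝ) := Real.rpow_le_rpow_of_exponent_le hr1 hα1
        _ = r := Real.rpow_one r
    have ht : h * x - (⌊h * x⌋ : ℝ) ≤ (h * x - (⌊h * x⌋ : ℝ)) ^ α :=
      aux_rpow_ge_self (by linarith) (by linarith) hα0' hα1
    have e1 : h ^ α * (N + (x - N) ^ α) = h ^ α * N + r ^ α := by rw [mul_add, hru]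
    have e2 : h ^ α * N ≤ h * N := mul_le_mul_of_nonneg_right hhα hN0
    nlinarith [ht, e2, hrα]
  push_neg at hr1
  rcases eq_or_lt_of_le hN0 with hN1 | hN1
  · -- N = 0 : equality case
    have hxN : x = x - N := by rw [← hN1]; ring
    have hflo : ⌊h * x⌋ = 0 := by
      rw [Int.floor_eq_zero_iff]
      constructor
      · exact mul_nonneg h0.le hx
      · rw [hxN]; exact hr1
    rw [hflo, ← hN1]
    push_cast
    rw [sub_zero, zero_add, zero_add, sub_zero]
    rw [← Real.mul_rpow h0.le hx]
  · -- 1 ≤ N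
    have hN1' : (1:ℝ) ≤ N := by
      rw [hN] at hN1 ⊢
      have : (0:ℤ) < ⌊x⌋ := by exact_mod_cast hN1
      exact_mod_cast this
    set k : ℝ := (⌊h * N⌋ : ℝ) with hk
    have hk1 : k ≤ h * N := Int.floor_le _
    have hk2 : h * N < k + 1 := Int.lt_floor_add_one _
    set s : ℝ := h * N - k with hs
    have hs0 : 0 ≤ s := by simp [hs]; linarith
    have hs1 : s < 1 := by simp [hs]; linarith
    have hNk : N ≤ k := by
      have h1 : (⌊x⌋ : ℝ) ≤ h * N := by nlinarith
      have h2 : ⌊x⌋ ≤ ⌊h * N⌋ := Int.le_floor.2 h1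
      rw [hk, hN]
      exact_mod_cast h2
    have hsD : s ≤ h * N - N := by simp [hs]; linarith
    have hber : h ^ α ≤ 1 + α * (h - 1) := by
      have hb := rpow_one_add_le_one_add_mul_self (s := h - 1) (by linarith) hα0 hα1
      rwa [show (1 : ℝ) + (h - 1) = h by ring] at hb
    have e1 : h ^ α * (N + (x - N) ^ α) = h ^ α * N + r ^ α := by rw [mul_add, hru]
    have e2 : h ^ α * N ≤ (1 + α * (h - 1)) * N :=
      mul_le_mul_of_nonneg_right hber hN0
    have hhx : h * x = k + (s + r) := by rw [hs, hr]; ring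
    have hint : (0:ℝ) ≤ (1 - α) * ((h * N - N) - s) :=
      mul_nonneg (by linarith) (by linarith)
    by_cases hsr : s + r < 1
    · -- floor h*x = k
      have hflo : ⌊h * x⌋ = ⌊h * N⌋ := by
        rw [Int.floor_eq_iff]
        constructor
        · rw [hhx]; push_cast; linarith
        · rw [hhx]; push_cast; linarith
      have hkey : r ^ α + α * s ≤ (r + s) ^ α :=
        aux_key_rpow hα0' hα1 hr0 hs0 (by linarith)
      have hteq : h * x - (⌊h * x⌋ : ℝ) = r + s := by
        rw [hflo, ← hk, hhx]; ring
      rw [hteq, hflo, ← hk]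
      nlinarith [hkey, e2, hint]
    · -- floor h*x = k + 1
      push_neg at hsr
      have hflo : ⌊h * x⌋ = ⌊h * N⌋ + 1 := by
        rw [Int.floor_eq_iff]
        constructor
        · rw [hhx]; push_cast; linarith
        · rw [hhx]; push_cast; linarith
      have hteq : h * x - (⌊h * x⌋ : ℝ) = s + r - 1 := by
        rw [hflo, hhx]; push_cast [← hk]; ring
      have hsub : r ^ α ≤ (s + r - 1) ^ α + (1 - s) ^ α := by
        have := aux_rpow_subadd hα0' hα1 (by linarith : (0:ℝ) ≤ s + r - 1)
          (by linarith : (0:ℝ) ≤ 1 - s)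
        rwa [show s + r - 1 + (1 - s) = r by ring] at this
      have hber2 : (1 - s) ^ α ≤ 1 + α * (-s) := by
        have hb := rpow_one_add_le_one_add_mul_self (s := -s) (by linarith) hα0 hα1
        rwa [show (1 : ℝ) + -s = 1 - s by ring] at hb
      have hk' : h * N - s = k := by rw [hs]; ring
      have hint' : (1 + α * (h - 1)) * N - α * s ≤ k := by
        calc (1 + α * (h - 1)) * N - α * s
            = (h * N - s) - (1 - α) * ((h * N - N) - s) := by ring
          _ ≤ h * N - s := by linarith [hint]
          _ = k := hk'
      rw [hteq, hflo]
      push_cast [← hk]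
      linarith [hsub, hber2, e2, hint', e1]
end

section
/- Fix m₁, m₂ > 0 and α ∈ [0,1]. With k_i(c) = c^α H_{c,α}(m_i) and k₃(c) = c^α H_{c,α}(m₁+m₂) as above, lim_{c→0⁺} k₁(c)/k₃(c) = m₁/(m₁+m₂) and lim_{c→0⁺} k₂(c)/k₃(c) = m₂/(m₁+m₂). -/
open Filter
open scoped Topology

noncomputable def Hc (c α x : ℝ) : ℝ :=
  (⌊x / c⌋ : ℝ) + (x / c - ⌊x / c⌋) ^ α

lemma Hc_bounds (c α x : ℝ) (hc : 0 < c) (hα : α ∈ Set.Icc (0 : ℝ) 1) :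
    (⌊x / c⌋ : ℝ) ≤ Hc c α x ∧ Hc c α x ≤ (⌊x / c⌋ : ℝ) + 1 := by
  have hf0 : (0 : ℝ) ≤ x / c - ⌊x / c⌋ := by
    have := Int.floor_le (x / c); linarith
  have hf1 : x / c - ⌊x / c⌋ ≤ 1 := by
    have := Int.lt_floor_add_one (x / c); linarith
  constructor
  · have : (0 : ℝ) ≤ (x / c - ⌊x / c⌋) ^ α := Real.rpow_nonneg hf0 α
    simp only [Hc]; linarith
  · have : (x / c - ⌊x / c⌋) ^ α ≤ 1 := Real.rpow_le_one hf0 hf1 hα.1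
    simp only [Hc]; linarith

lemma key (m α : ℝ) (hα : α ∈ Set.Icc (0 : ℝ) 1) :
    Tendsto (fun c : ℝ => c * Hc c α m) (𝓝[>] (0 : ℝ)) (𝓝 m) := by
  have h₁ : Tendsto (fun c : ℝ => m - c) (𝓝[>] (0 : ℝ)) (𝓝 m) := by
    have : Tendsto (fun c : ℝ => m - c) (𝓝 (0 : ℝ)) (𝓝 (m - 0)) :=
      (tendsto_const_nhds.sub tendsto_id)
    simpa using this.mono_left nhdsWithin_le_nhds
  have h₂ : Tendsto (fun c : ℝ => m + c) (𝓝[>] (0 : ℝ)) (𝓝 m) := by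
    have : Tendsto (fun c : ℝ => m + c) (𝓝 (0 : ℝ)) (𝓝 (m + 0)) :=
      (tendsto_const_nhds.add tendsto_id)
    simpa using this.mono_left nhdsWithin_le_nhds
  refine tendsto_of_tendsto_of_tendsto_of_le_of_le' h₁ h₂ ?_ ?_
  · filter_upwards [self_mem_nhdsWithin] with c hc
    have hc : (0 : ℝ) < c := hc
    have hb := (Hc_bounds c α m hc hα).1
    have hfl : m / c - 1 ≤ (⌊m / c⌋ : ℝ) := by
      have := Int.lt_floor_add_one (m / c); linarith
    have : c * (m / c - 1) ≤ c * Hc c α m := by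
      apply mul_le_mul_of_nonneg_left (le_trans hfl hb) hc.le
    calc m - c = c * (m / c - 1) := by field_simp
      _ ≤ c * Hc c α m := this
  · filter_upwards [self_mem_nhdsWithin] with c hc
    have hc : (0 : ℝ) < c := hc
    have hb := (Hc_bounds c α m hc hα).2
    have hfl : (⌊m / c⌋ : ℝ) + 1 ≤ m / c + 1 := by
      have := Int.floor_le (m / c); linarith
    calc c * Hc c α m ≤ c * (m / c + 1) :=
          mul_le_mul_of_nonneg_left (le_trans hb hfl) hc.le
      _ = m + c := by field_simp

lemma ratio (m M α : ℝ) (hm : 0 < m) (hM : 0 < M) (hα : α ∈ Set.Icc (0 : ℝ) 1) :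
    Tendsto (fun c : ℝ => (c ^ α * Hc c α m) / (c ^ α * Hc c α M))
        (𝓝[>] (0 : ℝ)) (𝓝 (m / M)) := by
  have h := (key m α hα).div (key M α hα) hM.ne'
  refine h.congr' ?_
  filter_upwards [self_mem_nhdsWithin] with c hc
  have hc : (0 : ℝ) < c := hc
  have hp : (0 : ℝ) < c ^ α := Real.rpow_pos_of_pos hc α
  simp only [Pi.div_apply]
  rw [mul_div_mul_left _ _ hc.ne', mul_div_mul_left _ _ hp.ne']

theorem stmt18 (m₁ m₂ α : ℝ) (hm₁ : 0 < m₁) (hm₂ : 0 < m₂)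
    (hα : α ∈ Set.Icc (0 : ℝ) 1) :
    Tendsto (fun c : ℝ => (c ^ α * Hc c α m₁) / (c ^ α * Hc c α (m₁ + m₂)))
        (𝓝[>] (0 : ℝ)) (𝓝 (m₁ / (m₁ + m₂))) ∧
      Tendsto (fun c : ℝ => (c ^ α * Hc c α m₂) / (c ^ α * Hc c α (m₁ + m₂)))
        (𝓝[>] (0 : ℝ)) (𝓝 (m₂ / (m₁ + m₂))) :=
  ⟨ratio m₁ (m₁ + m₂) α hm₁ (by linarith) hα,
   ratio m₂ (m₁ + m₂) α hm₂ (by linarith) hα⟩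
end
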